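/- Let n > 4. Every non-abelian normal subgroup of the quasidihedral group QD_{2^n} has index at most 2 in QD_{2^n}. -/

import Mathlib

open SemidirectProduct Multiplicative

/-- For `n > 4`, every non-abelian normal subgroup of the quasidihedral group `QD_{2^n}` has
index at most `2`. -/
theorem quasidihedral_nonabelian_normal_index_le_two (n : ℕ) (hn : 4 < n)
    (φ : Multiplicative (ZMod 2) →* MulAut (Multiplicative (ZMod (2 ^ (n - 1)))))
    (hφ : ∀ x : Multiplicative (ZMod (2 ^ (n - 1))),
      φ (Multiplicative.ofAdd 1) x = x ^ (2 ^ (n - 2) - 1)) :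
    ∀ H : Subgroup (Multiplicative (ZMod (2 ^ (n - 1))) ⋊[φ] Multiplicative (ZMod 2)),
      H.Normal → (¬ ∀ x y : H, x * y = y * x) → H.index ≤ 2 := by
  intro H hN hna
  haveI : NeZero (2 ^ (n - 1)) := ⟨by positivity⟩
  have hz2 : ∀ r : Multiplicative (ZMod 2), r = 1 ∨ r = Multiplicative.ofAdd 1 := by decide
  -- step 1 : some element of H has nontrivial right component
  obtain ⟨g, hgH, hgr⟩ : ∃ g ∈ H, SemidirectProduct.right g = Multiplicative.ofAdd 1 := by
    by_contra hcon
    push_neg at hcon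
    apply hna
    intro x y
    have hxr : (x : _ ⋊[φ] _).right = 1 := (hz2 _).resolve_right (hcon _ x.2)
    have hyr : (y : _ ⋊[φ] _).right = 1 := (hz2 _).resolve_right (hcon _ y.2)
    have : (x : _ ⋊[φ] _) * y = (y : _ ⋊[φ] _) * x := by
      apply SemidirectProduct.ext
      · simp [mul_left, hxr, hyr, mul_comm]
      · simp [mul_right, hxr, hyr]
    exact Subtype.ext this
  -- abbreviations
  set b : Multiplicative (ZMod 2) := Multiplicative.ofAdd 1 with hb
  have hbb : b * b = 1 := by decide
  have hbinv : b⁻¹ = b := by decide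
  have hφbb : ∀ y : Multiplicative (ZMod (2 ^ (n - 1))), φ b (φ b y) = y := by
    intro y
    rw [← MulAut.mul_apply, ← map_mul, hbb, map_one, MulAut.one_apply]
  -- the commutator of inl (ofAdd 1) and g
  set a1 : Multiplicative (ZMod (2 ^ (n - 1))) ⋊[φ] Multiplicative (ZMod 2) :=
    SemidirectProduct.inl (Multiplicative.ofAdd 1) with ha1
  set c : Multiplicative (ZMod (2 ^ (n - 1))) ⋊[φ] Multiplicative (ZMod 2) :=
    a1 * g * a1⁻¹ * g⁻¹ with hcdef
  have hcH : c ∈ H := by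
    have h1 : a1 * g * a1⁻¹ ∈ H := hN.conj_mem g hgH a1
    exact mul_mem h1 (inv_mem hgH)
  set t : ZMod (2 ^ (n - 1)) := 1 - ((2 ^ (n - 2) - 1 : ℕ) : ZMod (2 ^ (n - 1))) with htdef
  have hc : c = SemidirectProduct.inl (Multiplicative.ofAdd t) := by
    apply SemidirectProduct.ext
    · show (a1 * g * a1⁻¹ * g⁻¹).left = _
      simp only [mul_left, inv_left, mul_right, inv_right, ha1, left_inl, right_inl,
        one_mul, mul_one, map_one, MulAut.one_apply, inv_inv, map_inv, hgr, ← hb]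
      rw [hφ]
      have hφinv : (φ b)⁻¹ = φ b := by rw [← map_inv, hbinv]
      simp only [inv_one, MulAut.one_apply, mul_one, one_mul, hφinv, hφbb]
      have h1 : (Multiplicative.ofAdd (1 : ZMod (2 ^ (n - 1)))) ^ (2 ^ (n - 2) - 1) =
          Multiplicative.ofAdd (((2 ^ (n - 2) - 1 : ℕ) : ZMod (2 ^ (n - 1)))) := by
        rw [← ofAdd_nsmul]
        congr 1
        simp [nsmul_eq_mul]
      rw [h1]
      apply Multiplicative.toAdd.injective
      simp only [toAdd_mul, toAdd_inv, toAdd_ofAdd]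
      rw [htdef]
      ring
    · show (a1 * g * a1⁻¹ * g⁻¹).right = _
      simp [mul_right, inv_right, ha1, right_inl]
  -- the projection mod 2
  have hd2 : (2:ℕ) ∣ 2 ^ (n - 1) := dvd_pow_self 2 (by omega)
  set π : ZMod (2 ^ (n - 1)) →+* ZMod 2 := ZMod.castHom hd2 (ZMod 2) with hπ
  have hπval : ∀ l : ZMod (2 ^ (n - 1)), π l = ((l.val : ℕ) : ZMod 2) := by
    intro l
    rw [hπ, ZMod.castHom_apply, ← ZMod.natCast_val]
  have hn3 : n - 2 = (n - 3) + 1 := by omega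
  have hpow : (2 : ℕ) ^ (n - 2) = 2 * 2 ^ (n - 3) := by rw [hn3, pow_succ]; ring
  have h1le : (1:ℕ) ≤ 2 ^ (n - 2) := Nat.one_le_two_pow
  set u : ZMod (2 ^ (n - 1)) := 1 - ((2 ^ (n - 3) : ℕ) : ZMod (2 ^ (n - 1))) with hu
  have ht2u : t = 2 * u := by
    rw [htdef, hu, Nat.cast_sub h1le, hpow]
    push_cast
    ring
  have hunit : IsUnit u := by
    have hle : (2:ℕ) ^ (n - 3) ≤ 2 ^ (n - 1) := Nat.pow_le_pow_right (by norm_num) (by omega)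
    have hw : (((2 ^ (n - 1) - 2 ^ (n - 3) + 1 : ℕ)) : ZMod (2 ^ (n - 1))) = u := by
      have h0 : ((2 ^ (n - 1) : ℕ) : ZMod (2 ^ (n - 1))) = 0 := ZMod.natCast_self _
      push_cast at h0
      rw [hu]
      push_cast [Nat.cast_sub hle]
      linear_combination h0
    have heven' : Even (2 ^ (n - 1) - 2 ^ (n - 3)) := by
      refine Even.tsub ?_ ?_
      · exact (Nat.even_pow.mpr ⟨even_two, by omega⟩)
      · exact (Nat.even_pow.mpr ⟨even_two, by omega⟩)
    have hodd : Odd (2 ^ (n - 1) - 2 ^ (n - 3) + 1) := Even.add_one heven'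
    have hcop : Nat.Coprime (2 ^ (n - 1) - 2 ^ (n - 3) + 1) (2 ^ (n - 1)) := by
      refine Nat.Coprime.pow_right _ ?_
      exact Nat.coprime_two_right.mpr hodd
    rw [← hw]
    exact (ZMod.isUnit_iff_coprime _ _).mpr hcop
  obtain ⟨v, hv⟩ := hunit.exists_right_inv
  -- every element of the even part of the cyclic subgroup lies in H
  have heven : ∀ l : ZMod (2 ^ (n - 1)), π l = 0 →
      (SemidirectProduct.inl (Multiplicative.ofAdd l) :
        Multiplicative (ZMod (2 ^ (n - 1))) ⋊[φ] Multiplicative (ZMod 2)) ∈ H := by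
    intro l hl
    have h2 : 2 ∣ l.val := by
      rw [hπval] at hl
      exact (ZMod.natCast_eq_zero_iff _ _).mp hl
    obtain ⟨j, hj⟩ := h2
    have hlval : ((l.val : ℕ) : ZMod (2 ^ (n - 1))) = l := by
      simp [ZMod.natCast_val, ZMod.cast_id]
    set k : ℕ := (((j : ZMod (2 ^ (n - 1))) * v)).val with hk
    have hck : c ^ k = SemidirectProduct.inl (Multiplicative.ofAdd l) := by
      rw [hc, ← map_pow]
      congr 1
      rw [← ofAdd_nsmul]
      congr 1
      have hkz : ((k : ℕ) : ZMod (2 ^ (n - 1))) = (j : ZMod (2 ^ (n - 1))) * v := by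
        simp [hk, ZMod.natCast_val, ZMod.cast_id]
      rw [nsmul_eq_mul, hkz, ht2u, ← hlval, hj]
      push_cast
      linear_combination (2 * (j : ZMod (2 ^ (n - 1)))) * hv
    rw [← hck]
    exact pow_mem hcH k
  -- π is insensitive to the twisting automorphisms
  have hπφ : ∀ (r : Multiplicative (ZMod 2)) (y : Multiplicative (ZMod (2 ^ (n - 1)))),
      π (Multiplicative.toAdd (φ r y)) = π (Multiplicative.toAdd y) := by
    intro r y
    rcases hz2 r with rfl | rfl
    · simp
    · rw [hφ, toAdd_pow, map_nsmul, nsmul_eq_mul]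
      have hodd : Odd (2 ^ (n - 2) - 1) := by
        refine ⟨2 ^ (n - 3) - 1, ?_⟩
        have h3 : (1:ℕ) ≤ 2 ^ (n - 3) := Nat.one_le_two_pow
        omega
      have hone : (((2 ^ (n - 2) - 1 : ℕ)) : ZMod 2) = 1 := by
        obtain ⟨m, hm⟩ := hodd
        rw [hm]
        push_cast
        rw [show ((2:ZMod 2)) = 0 from by decide]
        ring
      rw [hone, one_mul]
  -- the homomorphism to ZMod 2 whose kernel sits inside H
  set cx : ZMod 2 := π (Multiplicative.toAdd g.left) with hcx
  set f : (Multiplicative (ZMod (2 ^ (n - 1))) ⋊[φ] Multiplicative (ZMod 2)) →*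
      Multiplicative (ZMod 2) :=
    MonoidHom.mk' (fun p => Multiplicative.ofAdd
      (π (Multiplicative.toAdd p.left) - cx * (Multiplicative.toAdd p.right)))
      (by
        intro p q
        simp only [mul_left, mul_right, toAdd_mul, map_add, hπφ, ← ofAdd_add]
        congr 1
        ring) with hf
  have hker : f.ker ≤ H := by
    intro p hp
    rw [MonoidHom.mem_ker, hf] at hp
    simp only [MonoidHom.mk'_apply] at hp
    have hp' : π (Multiplicative.toAdd p.left) = cx * (Multiplicative.toAdd p.right) := by
      have h0 : π (Multiplicative.toAdd p.left) - cx * (Multiplicative.toAdd p.right) = 0 := by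
        simpa using congrArg Multiplicative.toAdd hp
      exact sub_eq_zero.mp h0
    rcases hz2 p.right with hr | hr
    · have hl0 : π (Multiplicative.toAdd p.left) = 0 := by
        rw [hp', hr]
        simp
      have hmem := heven (Multiplicative.toAdd p.left) hl0
      have hpe : p = SemidirectProduct.inl p.left := by
        apply SemidirectProduct.ext
        · simp [left_inl]
        · simp [right_inl, hr]
      rw [hpe]
      simpa using hmem
    · have hq : p * g⁻¹ = SemidirectProduct.inl (p.left * g.left⁻¹) := by
        apply SemidirectProduct.ext
        · simp only [mul_left, inv_left, hgr, hr, hbinv, left_inl, hφbb]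
        · simp only [mul_right, inv_right, right_inl, hgr, hr, hbinv, hbb]
      have hql : π (Multiplicative.toAdd (p.left * g.left⁻¹)) = 0 := by
        rw [toAdd_mul, toAdd_inv, map_add, map_neg, hp', hr, ← hcx]
        simp [hb]
        exact CharTwo.add_self_eq_zero cx
      have hmem := heven _ hql
      have hps : p = (p * g⁻¹) * g := by group
      rw [hps, hq]
      exact mul_mem (by simpa using hmem) hgH
  have h1 : H.index ∣ f.ker.index := Subgroup.index_dvd_of_le hker
  have h2 : f.ker.index ∣ 2 := by
    rw [Subgroup.index_ker f]
    have hcard := Subgroup.card_subgroup_dvd_card f.range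
    have : Nat.card (Multiplicative (ZMod 2)) = 2 := by
      simp [Nat.card_eq_fintype_card]
    rwa [this] at hcard
  exact Nat.le_of_dvd (by norm_num) (h1.trans h2)
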